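/- Let M1, M2 be integers with 4 ≤ M1 ≤ M2. Then the average effective resistance of the two-dimensional toroidal grid satisfies R_ave(T_{M1,M2}) ≥ (1/(2π))·log M1 − (1/12)·(M2/M1) − 1/2, where log denotes the natural logarithm. -/

import Mathlib

open Real Finset

/-- Average effective resistance of the two-dimensional toroidal grid `T_{M1,M2}`. -/
noncomputable def Rave2 (M1 M2 : ℕ) : ℝ :=
  (1 / ((M1 : ℝ) * M2)) * ∑ i ∈ Finset.range M1, ∑ j ∈ Finset.range M2,
    if i = 0 ∧ j = 0 then 0
    else 1 / (4 - 2 * Real.cos (2 * Real.pi * i / M1) - 2 * Real.cos (2 * Real.pi * j / M2))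

lemma myArctan_nonneg {x : ℝ} (hx : 0 ≤ x) : 0 ≤ Real.arctan x := by
  have := Real.arctan_strictMono.monotone hx
  rwa [Real.arctan_zero] at this

lemma myArctan_le_self {x : ℝ} (hx : 0 ≤ x) : Real.arctan x ≤ x := by
  calc Real.arctan x ≤ Real.tan (Real.arctan x) :=
        Real.le_tan (myArctan_nonneg hx) (Real.arctan_lt_pi_div_two x)
    _ = x := Real.tan_arctan x

lemma myArctan_diff_le {x y : ℝ} (hx : 0 ≤ x) (hxy : x ≤ y) :
    Real.arctan y - Real.arctan x ≤ (y - x) / (1 + x ^ 2) := by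
  have hy : 0 ≤ y := hx.trans hxy
  have h1 : y * (-x) < 1 := by nlinarith
  have h2 := Real.arctan_add h1
  rw [Real.arctan_neg] at h2
  have h4 : (0:ℝ) < 1 + y * x := by nlinarith
  have h3 : Real.arctan y - Real.arctan x = Real.arctan ((y - x) / (1 + y * x)) := by
    rw [sub_eq_add_neg, h2]; ring_nf
  rw [h3]
  calc Real.arctan ((y - x) / (1 + y * x)) ≤ (y - x) / (1 + y * x) :=
        myArctan_le_self (div_nonneg (by linarith) h4.le)
    _ ≤ (y - x) / (1 + x ^ 2) := by
        apply div_le_div_of_nonneg_left (by linarith) (by positivity)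
        nlinarith

lemma myTele (a t : ℝ) (ha : 0 < a) (ht : 0 ≤ t) (m : ℕ) : ∀ n : ℕ,
    Real.arctan (t * (m + n) / a) - Real.arctan (t * m / a) ≤
      ∑ k ∈ Finset.range n, t * a / (a ^ 2 + (t * (m + k)) ^ 2)
  | 0 => by simp
  | (n+1) => by
      rw [Finset.sum_range_succ]
      have ih := myTele a t ha ht m n
      have hx : (0:ℝ) ≤ t * (m + n) / a := by positivity
      have hxy : t * ((m:ℝ) + n) / a ≤ t * ((m:ℝ) + (n+1)) / a := by
        gcongr
        linarith
      have key := myArctan_diff_le hx hxy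
      have heq : (t * ((m:ℝ) + (n+1)) / a - t * ((m:ℝ) + n) / a) / (1 + (t * ((m:ℝ) + n) / a) ^ 2)
          = t * a / (a ^ 2 + (t * ((m:ℝ) + n)) ^ 2) := by
        have h2 : a ^ 2 + (t * ((m:ℝ) + n)) ^ 2 > 0 := by positivity
        field_simp
        ring
      rw [heq] at key
      push_cast
      push_cast at ih key
      linarith

lemma mySumInvSq : ∀ n : ℕ, ∑ i ∈ Finset.Icc 1 n, (1:ℝ) / (i:ℝ) ^ 2 ≤ 2 - 2 / (n + 1)
  | 0 => by norm_num
  | (n+1) => by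
      rw [← Finset.Ico_add_one_right_eq_Icc, Finset.sum_Ico_succ_top (by omega), Finset.Ico_add_one_right_eq_Icc]
      have ih := mySumInvSq n
      have h1 : ((n:ℝ) + 1) > 0 := by positivity
      have h2 : ((n:ℝ) + 2) > 0 := by positivity
      have key : (1:ℝ) / ((n:ℝ)+1) ^ 2 ≤ 2 / ((n:ℝ)+1) - 2 / ((n:ℝ)+2) := by
        rw [div_sub_div _ _ (by positivity) (by positivity),
          div_le_div_iff₀ (by positivity) (by positivity)]
        ring_nf
        nlinarith
      have e : ((n:ℝ) + 1 + 1) = ((n:ℝ) + 2) := by ring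
      push_cast
      rw [e]
      push_cast at ih
      linarith

lemma myReflect {N k : ℕ} (hk : 2*k < N) (f : ℕ → ℝ)
    (hf0 : ∀ i, 0 ≤ f i)
    (hsymm : ∀ j ∈ Finset.Icc 1 k, f (N - j) = f j) :
    (∑ j ∈ Finset.range (k+1), f j) + ∑ j ∈ Finset.Icc 1 k, f j ≤ ∑ j ∈ Finset.range N, f j := by
  classical
  set s2 := (Finset.Icc 1 k).image (fun j => N - j) with hs2
  have himg : ∑ j ∈ s2, f j = ∑ j ∈ Finset.Icc 1 k, f j := by
    rw [hs2, Finset.sum_image ?_]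
    · exact Finset.sum_congr rfl hsymm
    · intro x hx y hy hxy
      simp only [Finset.mem_coe, Finset.mem_Icc] at hx hy hxy
      omega
  have hdisj : Disjoint (Finset.range (k+1)) s2 := by
    rw [Finset.disjoint_left]
    intro x hx hx2
    simp only [Finset.mem_range] at hx
    simp only [hs2, Finset.mem_image, Finset.mem_Icc] at hx2
    obtain ⟨j, hj, rfl⟩ := hx2
    omega
  have hsub : Finset.range (k+1) ∪ s2 ⊆ Finset.range N := by
    intro x hx
    simp only [Finset.mem_union, Finset.mem_range, hs2, Finset.mem_image,
      Finset.mem_Icc] at hx ⊢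
    rcases hx with h | ⟨j, hj, rfl⟩ <;> omega
  calc (∑ j ∈ Finset.range (k+1), f j) + ∑ j ∈ Finset.Icc 1 k, f j
      = ∑ j ∈ Finset.range (k+1) ∪ s2, f j := by rw [Finset.sum_union hdisj, himg]
    _ ≤ ∑ j ∈ Finset.range N, f j :=
        Finset.sum_le_sum_of_subset_of_nonneg hsub (fun i _ _ => hf0 i)

lemma myCosLtOne {x : ℝ} (h0 : 0 < x) (hπ : x ≤ π) : Real.cos x < 1 := by
  have h := Real.cos_le_one_sub_mul_cos_sq (x := x) (by rw [abs_of_pos h0]; exact hπ)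
  have h2 : 0 < 2 / π ^ 2 * x ^ 2 := by positivity
  linarith

lemma myCosReflect {N j : ℕ} (hj : j ≤ N) (hN : 0 < N) :
    Real.cos (2 * π * ((N - j : ℕ) : ℝ) / N) = Real.cos (2 * π * (j : ℝ) / N) := by
  have hNR : (0:ℝ) < N := by exact_mod_cast hN
  have hcast : ((N - j : ℕ) : ℝ) = (N : ℝ) - j := by
    push_cast [Nat.cast_sub hj]; ring
  rw [hcast]
  have : 2 * π * ((N : ℝ) - j) / N = 2 * π - 2 * π * (j : ℝ) / N := by
    field_simp
  rw [this, Real.cos_two_pi_sub]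

set_option maxHeartbeats 2000000 in
theorem torus2_lower_log (M1 M2 : ℕ) (h1 : 4 ≤ M1) (h12 : M1 ≤ M2) :
    Rave2 M1 M2 ≥ (1 / (2 * Real.pi)) * Real.log M1 - (1 / 12) * ((M2 : ℝ) / M1) - 1 / 2 := by
  have h2 : 4 ≤ M2 := le_trans h1 h12
  have hpi : (0:ℝ) < π := Real.pi_pos
  have hM1R : (4:ℝ) ≤ M1 := by exact_mod_cast h1
  have hM2R : (4:ℝ) ≤ M2 := by exact_mod_cast h2
  have hM1pos : (0:ℝ) < M1 := by linarith
  have hM2pos : (0:ℝ) < M2 := by linarith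
  have hM12R : (M1:ℝ) ≤ M2 := by exact_mod_cast h12
  set K := (M1 - 1) / 2 with hKdef
  set J := (M2 - 1) / 2 with hJdef
  set t1 : ℝ := 2 * π / M1 with ht1def
  set t2 : ℝ := 2 * π / M2 with ht2def
  have ht1 : 0 < t1 := by positivity
  have ht2 : 0 < t2 := by positivity
  set term : ℕ → ℕ → ℝ := fun i j =>
    if i = 0 ∧ j = 0 then 0
    else 1 / (4 - 2 * Real.cos (2 * Real.pi * i / M1) - 2 * Real.cos (2 * Real.pi * j / M2))
    with hterm_def
  have hR : Rave2 M1 M2 =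
      (1 / ((M1 : ℝ) * M2)) * ∑ i ∈ Finset.range M1, ∑ j ∈ Finset.range M2, term i j := rfl
  have htermnn : ∀ i j, 0 ≤ term i j := by
    intro i j
    simp only [hterm_def]
    split
    · exact le_refl 0
    · apply one_div_nonneg.mpr
      have c1 := Real.cos_le_one (2 * Real.pi * (i:ℝ) / M1)
      have c2 := Real.cos_le_one (2 * Real.pi * (j:ℝ) / M2)
      linarith
  set G : ℕ → ℝ := fun i => ∑ j ∈ Finset.range M2, term i j with hGdef
  have hGnn : ∀ i, 0 ≤ G i := by
    intro i
    rw [hGdef]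
    exact Finset.sum_nonneg (fun j _ => htermnn i j)
  have hR2 : Rave2 M1 M2 = (1 / ((M1 : ℝ) * M2)) * ∑ i ∈ Finset.range M1, G i := hR
  have hK1 : 2 * K < M1 := by omega
  have hJ1 : 2 * J < M2 := by omega
  have hJ2 : M2 ≤ 2 * (J + 1) := by omega
  -- inner sum estimate
  have hinner : ∀ i ∈ Finset.Icc 1 K,
      π / (t2 * (t1 * (i:ℝ))) - 2 / (t2 * π) - 1 / (t1 * (i:ℝ)) ^ 2 ≤ G i := by
    intro i hi
    obtain ⟨hi1, hiK⟩ := Finset.mem_Icc.mp hi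
    have hiR : (1:ℝ) ≤ (i:ℝ) := by exact_mod_cast hi1
    have ha : 0 < t1 * (i:ℝ) := by nlinarith
    have h2i : 2 * i ≤ M1 := by omega
    have h2iR : (2:ℝ) * (i:ℝ) ≤ (M1:ℝ) := by exact_mod_cast h2i
    have haπ : t1 * (i:ℝ) ≤ π := by
      rw [ht1def, div_mul_eq_mul_div, div_le_iff₀ hM1pos]
      nlinarith
    set a := t1 * (i:ℝ) with hadef
    have hcosa : Real.cos a < 1 := myCosLtOne ha haπ
    have hpt : ∀ j : ℕ, j ≤ J → 1 / (a ^ 2 + (t2 * (j:ℝ)) ^ 2) ≤ term i j := by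
      intro j hj
      have hne : ¬(i = 0 ∧ j = 0) := by rintro ⟨h, -⟩; omega
      simp only [hterm_def, if_neg hne]
      have e1 : 2 * π * (i:ℝ) / M1 = a := by rw [hadef, ht1def]; ring
      have e2 : 2 * π * (j:ℝ) / M2 = t2 * (j:ℝ) := by rw [ht2def]; ring
      rw [e1, e2]
      have hc2 : Real.cos (t2 * (j:ℝ)) ≤ 1 := Real.cos_le_one _
      have hb1 := Real.one_sub_sq_div_two_le_cos (x := a)
      have hb2 := Real.one_sub_sq_div_two_le_cos (x := t2 * (j:ℝ))
      have hdpos : 0 < 4 - 2 * Real.cos a - 2 * Real.cos (t2 * (j:ℝ)) := by linarith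
      exact one_div_le_one_div_of_le hdpos (by nlinarith)
    set S1 := ∑ j ∈ Finset.range (J+1), 1 / (a ^ 2 + (t2 * (j:ℝ)) ^ 2) with hS1
    set S2 := ∑ j ∈ Finset.range J, 1 / (a ^ 2 + (t2 * (1 + (j:ℝ))) ^ 2) with hS2
    have htele1 := myTele a t2 ha ht2.le 0 (J+1)
    simp only [Nat.cast_zero, zero_add, mul_zero, zero_div, Real.arctan_zero, sub_zero,
      Nat.cast_add, Nat.cast_one] at htele1
    have hsum1 : ∑ k ∈ Finset.range (J+1), t2 * a / (a ^ 2 + (t2 * (k:ℝ)) ^ 2)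
        = t2 * a * S1 := by
      rw [hS1, Finset.mul_sum]
      exact Finset.sum_congr rfl (fun k _ => by rw [mul_one_div])
    rw [hsum1] at htele1
    have htele2 := myTele a t2 ha ht2.le 1 J
    simp only [Nat.cast_one, mul_one] at htele2
    have hsum2 : ∑ k ∈ Finset.range J, t2 * a / (a ^ 2 + (t2 * (1 + (k:ℝ))) ^ 2)
        = t2 * a * S2 := by
      rw [hS2, Finset.mul_sum]
      exact Finset.sum_congr rfl (fun k _ => by rw [mul_one_div])
    rw [hsum2] at htele2
    have hcomm : t2 * (1 + (J:ℝ)) / a = t2 * ((J:ℝ) + 1) / a := by ring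
    rw [hcomm] at htele2
    have hglow : S1 + S2 ≤ G i := by
      have hsymmj : ∀ j ∈ Finset.Icc 1 J, term i (M2 - j) = term i j := by
        intro j hj
        obtain ⟨hj1, hjJ⟩ := Finset.mem_Icc.mp hj
        have hne1 : ¬(i = 0 ∧ M2 - j = 0) := by rintro ⟨h, -⟩; omega
        have hne2 : ¬(i = 0 ∧ j = 0) := by rintro ⟨h, -⟩; omega
        simp only [hterm_def, if_neg hne1, if_neg hne2]
        rw [myCosReflect (by omega) (by omega)]
      have hrefl := myReflect hJ1 (term i) (htermnn i) hsymmj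
      have hA : S1 ≤ ∑ j ∈ Finset.range (J+1), term i j := by
        rw [hS1]
        apply Finset.sum_le_sum
        intro j hj
        exact hpt j (Nat.lt_succ_iff.mp (Finset.mem_range.mp hj))
      have hB : S2 ≤ ∑ j ∈ Finset.Icc 1 J, term i j := by
        rw [hS2, ← Finset.Ico_add_one_right_eq_Icc, Finset.sum_Ico_eq_sum_range]
        apply Finset.sum_le_sum
        intro j hj
        have hjJ : 1 + j ≤ J := by
          have := Finset.mem_range.mp hj; omega
        have hh := hpt (1+j) hjJ
        push_cast at hh
        exact hh
      have hGi : G i = ∑ j ∈ Finset.range M2, term i j := by rw [hGdef]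
      rw [hGi]
      linarith
    have harc1 : π/2 - a/π ≤ Real.arctan (t2 * ((J:ℝ)+1) / a) := by
      have hJ2R : (M2:ℝ) ≤ 2*((J:ℝ)+1) := by exact_mod_cast hJ2
      have hπa : π ≤ t2 * ((J:ℝ)+1) := by
        rw [ht2def, div_mul_eq_mul_div, le_div_iff₀ hM2pos]
        nlinarith
      have hge : π / a ≤ t2 * ((J:ℝ)+1) / a := by gcongr
      have hmono := Real.arctan_strictMono.monotone hge
      have h3 : Real.arctan (π / a) = π/2 - Real.arctan (a / π) := by
        rw [show π / a = (a/π)⁻¹ by rw [inv_div], Real.arctan_inv_of_pos (by positivity)]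
      have h4 : Real.arctan (a/π) ≤ a/π := myArctan_le_self (by positivity)
      linarith
    have harc2 : Real.arctan (t2 / a) ≤ t2 / a := myArctan_le_self (by positivity)
    have hfinal : π - 2*(a/π) - t2/a ≤ t2 * a * (S1 + S2) := by
      have expand : t2 * a * (S1 + S2) = t2*a*S1 + t2*a*S2 := by ring
      rw [expand]
      linarith [htele1, htele2, harc1, harc2]
    have hlow : π / (t2 * a) - 2 / (t2 * π) - 1 / a ^ 2 ≤ S1 + S2 := by
      have h0 : 0 < t2 * a := by positivity
      have heq2 : π / (t2 * a) - 2 / (t2 * π) - 1 / a ^ 2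
          = (π - 2*(a/π) - t2/a) / (t2 * a) := by
        field_simp
      rw [heq2, div_le_iff₀ h0]
      have hcm : t2 * a * (S1 + S2) = (S1 + S2) * (t2 * a) := by ring
      linarith [hfinal, hcm]
    linarith [hglow, hlow]
  -- outer reflection
  have houter : 2 * ∑ i ∈ Finset.Icc 1 K, G i ≤ ∑ i ∈ Finset.range M1, G i := by
    have hsymmi : ∀ i ∈ Finset.Icc 1 K, G (M1 - i) = G i := by
      intro i hi
      obtain ⟨hi1, hiK⟩ := Finset.mem_Icc.mp hi
      simp only [hGdef]
      apply Finset.sum_congr rfl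
      intro j _
      have hne1 : ¬(M1 - i = 0 ∧ j = 0) := by rintro ⟨h, -⟩; omega
      have hne2 : ¬(i = 0 ∧ j = 0) := by rintro ⟨h, -⟩; omega
      simp only [hterm_def, if_neg hne1, if_neg hne2]
      rw [myCosReflect (by omega) (by omega)]
    have hrefl := myReflect hK1 G hGnn hsymmi
    have hdrop : ∑ i ∈ Finset.Icc 1 K, G i ≤ ∑ i ∈ Finset.range (K+1), G i := by
      apply Finset.sum_le_sum_of_subset_of_nonneg
      · intro x hx
        simp only [Finset.mem_Icc, Finset.mem_range] at hx ⊢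
        omega
      · intro i _ _
        exact hGnn i
    linarith
  -- sum the lower bounds
  set H := ∑ i ∈ Finset.Icc 1 K, (1:ℝ)/(i:ℝ) with hHdef
  set S := ∑ i ∈ Finset.Icc 1 K, (1:ℝ)/(i:ℝ)^2 with hSdef
  have hsum_lower : (M1*M2/(4*π))*H - (K:ℝ)*(M2/π^2) - ((M1:ℝ)^2/(4*π^2))*S
      ≤ ∑ i ∈ Finset.Icc 1 K, G i := by
    have step1 : ∑ i ∈ Finset.Icc 1 K,
        (π / (t2 * (t1 * (i:ℝ))) - 2 / (t2 * π) - 1 / (t1 * (i:ℝ)) ^ 2)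
        ≤ ∑ i ∈ Finset.Icc 1 K, G i := Finset.sum_le_sum hinner
    have e : ∀ i ∈ Finset.Icc 1 K, π / (t2 * (t1 * (i:ℝ))) - 2 / (t2 * π) - 1 / (t1 * (i:ℝ)) ^ 2
        = ((M1:ℝ)*M2/(4*π))*((1:ℝ)/(i:ℝ)) - (M2:ℝ)/π^2 - ((M1:ℝ)^2/(4*π^2))*((1:ℝ)/(i:ℝ)^2) := by
      intro i hi
      have hi1 : (1:ℝ) ≤ (i:ℝ) := by exact_mod_cast (Finset.mem_Icc.mp hi).1
      have hine : (i:ℝ) ≠ 0 := by linarith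
      rw [ht1def, ht2def]
      field_simp
      ring
    have step2 : ∑ i ∈ Finset.Icc 1 K,
        (π / (t2 * (t1 * (i:ℝ))) - 2 / (t2 * π) - 1 / (t1 * (i:ℝ)) ^ 2)
        = (M1*M2/(4*π))*H - (K:ℝ)*(M2/π^2) - ((M1:ℝ)^2/(4*π^2))*S := by
      rw [Finset.sum_congr rfl e, hHdef, hSdef, Finset.sum_sub_distrib, Finset.sum_sub_distrib,
        ← Finset.mul_sum, ← Finset.mul_sum, Finset.sum_const, Nat.card_Icc,
        Nat.add_sub_cancel, nsmul_eq_mul]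
    linarith [step1, step2]
  -- assemble
  have hc : (0:ℝ) ≤ 1/((M1:ℝ)*M2) := by positivity
  have hT : 2*((M1*M2/(4*π))*H - (K:ℝ)*(M2/π^2) - ((M1:ℝ)^2/(4*π^2))*S)
      ≤ ∑ i ∈ Finset.range M1, G i := by linarith
  have hRave : (1/((M1:ℝ)*M2)) * (2*((M1*M2/(4*π))*H - (K:ℝ)*(M2/π^2) - ((M1:ℝ)^2/(4*π^2))*S))
      ≤ Rave2 M1 M2 := by
    rw [hR2]
    exact mul_le_mul_of_nonneg_left hT hc
  have heqfin : (1/((M1:ℝ)*M2)) * (2*((M1*M2/(4*π))*H - (K:ℝ)*(M2/π^2) - ((M1:ℝ)^2/(4*π^2))*S))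
      = H/(2*π) - 2*(K:ℝ)/(π^2*M1) - (M1:ℝ)*S/(2*π^2*M2) := by
    field_simp
    ring
  rw [heqfin] at hRave
  -- bounds on H, S, K
  have hHlog : Real.log M1 - Real.log 2 ≤ H := by
    have hh1 : Real.log (↑(K+1)) ≤ (harmonic K : ℝ) := log_add_one_le_harmonic K
    have hh2 : (harmonic K : ℝ) = H := by
      rw [harmonic_eq_sum_Icc, hHdef]
      push_cast
      simp [one_div]
    have hh3 : ((M1:ℝ)/2) ≤ ((K:ℝ)+1) := by
      have hn : M1 ≤ 2*(K+1) := by omega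
      have hnR : (M1:ℝ) ≤ 2*((K:ℝ)+1) := by exact_mod_cast hn
      linarith
    have hh4 : Real.log ((M1:ℝ)/2) ≤ Real.log ((K:ℝ)+1) :=
      Real.log_le_log (by linarith) hh3
    have hh5 : Real.log ((M1:ℝ)/2) = Real.log M1 - Real.log 2 :=
      Real.log_div (by linarith) (by norm_num)
    have hh6 : Real.log ((K+1 : ℕ) : ℝ) = Real.log ((K:ℝ)+1) := by push_cast; rfl
    rw [hh6] at hh1
    linarith
  have hS2 : S ≤ 2 := by
    have h := mySumInvSq K
    have hp : (0:ℝ) < 2/((K:ℝ)+1) := by positivity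
    rw [hSdef]
    linarith
  have hS0 : 0 ≤ S := by
    rw [hSdef]
    apply Finset.sum_nonneg
    intro i _
    positivity
  have hK2 : 2*(K:ℝ) ≤ (M1:ℝ) := by
    have : 2*K ≤ M1 := by omega
    exact_mod_cast this
  have hK0 : (0:ℝ) ≤ (K:ℝ) := Nat.cast_nonneg K
  have hpi3 : (3:ℝ) < π := Real.pi_gt_three
  have hlog2 : Real.log 2 ≤ 0.6931471808 := Real.log_two_lt_d9.le
  -- final numeric estimates
  have b1 : (Real.log M1 - Real.log 2)/(2*π) ≤ H/(2*π) := by gcongr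
  have b2 : 2*(K:ℝ)/(π^2*M1) ≤ 1/9 := by
    have h1 : 2*(K:ℝ)/(π^2*M1) ≤ (M1:ℝ)/(π^2*M1) := by gcongr
    have h2 : (M1:ℝ)/(π^2*(M1:ℝ)) = 1/π^2 := by field_simp
    have h3 : (1:ℝ)/π^2 ≤ 1/9 := by
      apply one_div_le_one_div_of_le (by norm_num)
      nlinarith
    linarith
  have b3 : (M1:ℝ)*S/(2*π^2*M2) ≤ 1/9 := by
    have h1 : (M1:ℝ)*S ≤ (M2:ℝ)*2 := by nlinarith
    have h2 : (M1:ℝ)*S/(2*π^2*M2) ≤ (M2:ℝ)*2/(2*π^2*M2) := by gcongr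
    have h3 : (M2:ℝ)*2/(2*π^2*(M2:ℝ)) = 1/π^2 := by field_simp
    have h4 : (1:ℝ)/π^2 ≤ 1/9 := by
      apply one_div_le_one_div_of_le (by norm_num)
      nlinarith
    linarith
  have b4 : (1:ℝ)/12 ≤ (1/12)*((M2:ℝ)/M1) := by
    have h1 : (1:ℝ) ≤ (M2:ℝ)/M1 := (one_le_div hM1pos).mpr hM12R
    linarith
  have b5 : Real.log 2/(2*π) ≤ 0.6931471808/6 :=
    div_le_div₀ (by norm_num) hlog2 (by norm_num) (by linarith)
  have b6 : (Real.log M1 - Real.log 2)/(2*π) = Real.log M1/(2*π) - Real.log 2/(2*π) := by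
    ring
  have b7 : 1/(2*π)*Real.log M1 = Real.log M1/(2*π) := by ring
  rw [ge_iff_le]
  linarith [b1, b2, b3, b4, b5, b6, b7, hRave]
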